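/- Let γ, η be hyperbolic affine isometries of R^{2,1} with linear parts g, h and translational parts v_g, v_h. For n ≥ 1, if gh^n and all h^{n-k}gh^k are hyperbolic, then α(γη^n) = ⟨v_g, x⁰(gh^n)⟩ + Σ_{k=0}^{n-1} ⟨v_h, x⁰(h^{n-k} g h^k)⟩. -/

import Mathlib

noncomputable section

/-- The Lorentzian bilinear form of signature (2,1) on ℝ³. -/
def ldot (x y : Fin 3 → ℝ) : ℝ := x 0 * y 0 + x 1 * y 1 - x 2 * y 2

/-- The Lorentz cross-product, the unique bilinear map with ⟨u, v ⊠ w⟩ = det[u v w]. -/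
def lcross (v w : Fin 3 → ℝ) : Fin 3 → ℝ :=
  ![v 1 * w 2 - v 2 * w 1, v 2 * w 0 - v 0 * w 2, -(v 0 * w 1 - v 1 * w 0)]

/-- Determinant of the 3×3 matrix with columns x, y, z. -/
def det3 (x y z : Fin 3 → ℝ) : ℝ := (Matrix.transpose (Matrix.of ![x, y, z])).det

/-- Membership in SO(2,1)⁰: preserves the Lorentzian form, has determinant 1,
and preserves the future lightcone. -/
def IsSOplus (g : Matrix (Fin 3) (Fin 3) ℝ) : Prop :=
  (∀ x y : Fin 3 → ℝ, ldot (g.mulVec x) (g.mulVec y) = ldot x y) ∧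
  g.det = 1 ∧
  (∀ x : Fin 3 → ℝ, ldot x x = 0 → x ≠ 0 → x 2 > 0 → (g.mulVec x) 2 > 0)

/-- c is a (real) eigenvalue of the 3×3 matrix g. -/
def IsEigenvalue (g : Matrix (Fin 3) (Fin 3) ℝ) (c : ℝ) : Prop :=
  ∃ v : Fin 3 → ℝ, v ≠ 0 ∧ g.mulVec v = c • v

/-- x has Euclidean length one. -/
def EuclUnit (x : Fin 3 → ℝ) : Prop := x 0 ^ 2 + x 1 ^ 2 + x 2 ^ 2 = 1

/-- A future-pointing lightlike vector. -/
def IsFutureNull (x : Fin 3 → ℝ) : Prop := ldot x x = 0 ∧ x 2 > 0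

/-- The null frame of a hyperbolic g ∈ SO(2,1)⁰ : x0 is the unit-spacelike 1-eigenvector,
xm and xp are future-pointing Euclidean-unit eigenvectors for the eigenvalues λ and λ⁻¹
with 0 < λ < 1, and (x0, xm, xp) is positively oriented.  These conditions determine
x0 = x⁰(g), xm = x⁻(g), xp = x⁺(g) uniquely. -/
def IsNullFrameOf (g : Matrix (Fin 3) (Fin 3) ℝ) (x0 xm xp : Fin 3 → ℝ) : Prop :=
  g.mulVec x0 = x0 ∧ ldot x0 x0 = 1 ∧
  IsFutureNull xm ∧ EuclUnit xm ∧ IsFutureNull xp ∧ EuclUnit xp ∧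
  ∃ l : ℝ, 0 < l ∧ l < 1 ∧ g.mulVec xm = l • xm ∧ g.mulVec xp = l⁻¹ • xp ∧
    det3 x0 xm xp > 0

/-- g is hyperbolic: it admits three distinct real eigenvalues. -/
def IsHyperbolic (g : Matrix (Fin 3) (Fin 3) ℝ) : Prop :=
  ∃ a b c : ℝ, a ≠ b ∧ b ≠ c ∧ a ≠ c ∧
    IsEigenvalue g a ∧ IsEigenvalue g b ∧ IsEigenvalue g c

/- ---------------- auxiliary lemmas ---------------- -/

lemma ldot_add_left (x y z : Fin 3 → ℝ) : ldot (x + y) z = ldot x z + ldot y z := by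
  simp [ldot]; ring

lemma ldot_smul_self (a : ℝ) (x : Fin 3 → ℝ) : ldot (a • x) (a • x) = a ^ 2 * ldot x x := by
  simp [ldot]; ring

lemma ldot_sum_left (s : Finset ℕ) (f : ℕ → Fin 3 → ℝ) (z : Fin 3 → ℝ) :
    ldot (∑ i ∈ s, f i) z = ∑ i ∈ s, ldot (f i) z := by
  classical
  induction s using Finset.induction_on with
  | empty => simp [ldot]
  | @insert _ _ hx ih => rw [Finset.sum_insert hx, Finset.sum_insert hx, ldot_add_left, ih]

lemma mulVec_sum (A : Matrix (Fin 3) (Fin 3) ℝ) (s : Finset ℕ) (f : ℕ → Fin 3 → ℝ) :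
    A.mulVec (∑ i ∈ s, f i) = ∑ i ∈ s, A.mulVec (f i) := by
  classical
  induction s using Finset.induction_on with
  | empty => simp
  | @insert _ _ hx ih => rw [Finset.sum_insert hx, Finset.sum_insert hx, Matrix.mulVec_add, ih]

lemma IsSOplus.one : IsSOplus 1 := by
  refine ⟨fun x y => by simp [Matrix.one_mulVec], Matrix.det_one, fun x _ _ hx => by
    simpa [Matrix.one_mulVec] using hx⟩

lemma IsSOplus.mul {A B : Matrix (Fin 3) (Fin 3) ℝ} (hA : IsSOplus A) (hB : IsSOplus B) :
    IsSOplus (A * B) := by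
  obtain ⟨hA1, hA2, hA3⟩ := hA
  obtain ⟨hB1, hB2, hB3⟩ := hB
  refine ⟨fun x y => ?_, by rw [Matrix.det_mul, hA2, hB2, one_mul], fun x hx hx0 hx2 => ?_⟩
  · rw [← Matrix.mulVec_mulVec, ← Matrix.mulVec_mulVec, hA1, hB1]
  · rw [← Matrix.mulVec_mulVec]
    have hBx0 : B.mulVec x ≠ 0 := by
      intro hcon
      apply hx0
      have hBdet : IsUnit B.det := by rw [hB2]; exact isUnit_one
      have : B⁻¹.mulVec (B.mulVec x) = x := by
        rw [Matrix.mulVec_mulVec, Matrix.nonsing_inv_mul B hBdet, Matrix.one_mulVec]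
      rw [← this, hcon, Matrix.mulVec_zero]
    exact hA3 _ (by rw [hB1]; exact hx) hBx0 (hB3 _ hx hx0 hx2)

lemma IsSOplus.pow {A : Matrix (Fin 3) (Fin 3) ℝ} (hA : IsSOplus A) (m : ℕ) :
    IsSOplus (A ^ m) := by
  induction m with
  | zero => simpa using IsSOplus.one
  | succ k ih => rw [pow_succ]; exact ih.mul hA

lemma det3_eq (x y z : Fin 3 → ℝ) : det3 x y z =
    x 0 * (y 1 * z 2) - x 0 * (z 1 * y 2) - y 0 * (x 1 * z 2) + y 0 * (z 1 * x 2)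
      + z 0 * (x 1 * y 2) - z 0 * (y 1 * x 2) := by
  rw [det3, Matrix.det_transpose]
  simp [Matrix.det_fin_three]
  ring

lemma mulVec3 (k : Matrix (Fin 3) (Fin 3) ℝ) (x : Fin 3 → ℝ) (i : Fin 3) :
    k.mulVec x i = k i 0 * x 0 + k i 1 * x 1 + k i 2 * x 2 := by
  simp [Matrix.mulVec, dotProduct, Fin.sum_univ_three]

lemma det3_mulVec (k : Matrix (Fin 3) (Fin 3) ℝ) (x y z : Fin 3 → ℝ) :
    det3 (k.mulVec x) (k.mulVec y) (k.mulVec z) = k.det * det3 x y z := by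
  rw [det3_eq, det3_eq]
  simp only [mulVec3, Matrix.det_fin_three]
  ring

lemma det3_smul (a b c : ℝ) (x y z : Fin 3 → ℝ) :
    det3 (a • x) (b • y) (c • z) = a * b * c * det3 x y z := by
  simp only [det3_eq, Pi.smul_apply, smul_eq_mul]
  ring

set_option maxHeartbeats 1000000 in
/-- Uniqueness of the neutral vector of a null frame. -/
lemma frame_x0_unique {w : Matrix (Fin 3) (Fin 3) ℝ} {x0 xm xp y0 ym yp : Fin 3 → ℝ}
    (hx : IsNullFrameOf w x0 xm xp) (hy : IsNullFrameOf w y0 ym yp) : y0 = x0 := by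
  obtain ⟨hwx0, hx0n, ⟨hxmnull, hxm2⟩, hxmu, ⟨hxpnull, hxp2⟩, hxpu, l, hl0, hl1, hwxm, hwxp, hdet⟩ := hx
  obtain ⟨hwy0, hy0n, ⟨hymnull, hym2⟩, hymu, ⟨hypnull, hyp2⟩, hypu, m, hm0, hm1, hwym, hwyp, hdety⟩ := hy
  have hlinv : 1 < l⁻¹ := (one_lt_inv₀ hl0).2 hl1
  have hminv : 1 < m⁻¹ := (one_lt_inv₀ hm0).2 hm1
  set A : Matrix (Fin 3) (Fin 3) ℝ := (Matrix.of ![x0, xm, xp]).transpose with hA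
  have hAdet : A.det = det3 x0 xm xp := rfl
  have hAunit : IsUnit A.det := by
    rw [hAdet]; exact isUnit_iff_ne_zero.mpr (ne_of_gt hdet)
  have hAmul : ∀ u : Fin 3 → ℝ, A.mulVec u = u 0 • x0 + u 1 • xm + u 2 • xp := by
    intro u
    funext i
    simp only [mulVec3, hA, Matrix.transpose_apply, Matrix.of_apply, Matrix.cons_val_zero,
      Matrix.cons_val_one, Matrix.cons_val_two, Matrix.head_cons, Matrix.tail_cons,
      Pi.add_apply, Pi.smul_apply, smul_eq_mul]
    ring
  have coord : ∀ (v : Fin 3 → ℝ) (c : ℝ), w.mulVec v = c • v →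
      ∃ u : Fin 3 → ℝ, v = u 0 • x0 + u 1 • xm + u 2 • xp ∧
        (1 - c) * u 0 = 0 ∧ (l - c) * u 1 = 0 ∧ (l⁻¹ - c) * u 2 = 0 := by
    intro v c hv
    set u := A⁻¹.mulVec v with hu
    have hvu : A.mulVec u = v := by
      rw [hu, Matrix.mulVec_mulVec, Matrix.mul_nonsing_inv A hAunit, Matrix.one_mulVec]
    have hvdec : v = u 0 • x0 + u 1 • xm + u 2 • xp := by rw [← hvu, hAmul]
    refine ⟨u, hvdec, ?_⟩
    have e1 : w.mulVec v = u 0 • x0 + (l * u 1) • xm + (l⁻¹ * u 2) • xp := by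
      conv_lhs => rw [hvdec]
      rw [Matrix.mulVec_add, Matrix.mulVec_add, Matrix.mulVec_smul, Matrix.mulVec_smul,
        Matrix.mulVec_smul, hwx0, hwxm, hwxp]
      funext i
      simp only [Pi.add_apply, Pi.smul_apply, smul_eq_mul]
      ring
    rw [hv, hvdec] at e1
    have hzero : A.mulVec ![(1 - c) * u 0, (l - c) * u 1, (l⁻¹ - c) * u 2] = 0 := by
      rw [hAmul]
      funext i
      have hi := congrFun e1 i
      simp only [Pi.add_apply, Pi.smul_apply, smul_eq_mul, Pi.zero_apply,
        Matrix.cons_val_zero, Matrix.cons_val_one, Matrix.cons_val_two,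
        Matrix.head_cons, Matrix.tail_cons] at hi ⊢
      linear_combination (-1 : ℝ) * hi
    have hzero' : (![(1 - c) * u 0, (l - c) * u 1, (l⁻¹ - c) * u 2] : Fin 3 → ℝ) = 0 := by
      have h2 : A⁻¹.mulVec (A.mulVec ![(1 - c) * u 0, (l - c) * u 1, (l⁻¹ - c) * u 2]) =
          ![(1 - c) * u 0, (l - c) * u 1, (l⁻¹ - c) * u 2] := by
        rw [Matrix.mulVec_mulVec, Matrix.nonsing_inv_mul A hAunit, Matrix.one_mulVec]
      rw [← h2, hzero, Matrix.mulVec_zero]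
    refine ⟨?_, ?_, ?_⟩
    · simpa using congrFun hzero' 0
    · simpa using congrFun hzero' 1
    · simpa using congrFun hzero' 2
  -- decompose y0
  obtain ⟨u, hudec, hu0, hu1, hu2⟩ := coord y0 1 (by rw [hwy0, one_smul])
  have hu1' : u 1 = 0 := by
    rcases mul_eq_zero.mp hu1 with hc | hc
    · exfalso; linarith
    · exact hc
  have hu2' : u 2 = 0 := by
    rcases mul_eq_zero.mp hu2 with hc | hc
    · exfalso; linarith
    · exact hc
  have hy0 : y0 = u 0 • x0 := by
    rw [hudec, hu1', hu2']
    funext i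
    simp
  -- decompose ym
  obtain ⟨s, hsdec, hs0, hs1, hs2⟩ := coord ym m hwym
  have hs0' : s 0 = 0 := by
    rcases mul_eq_zero.mp hs0 with hc | hc
    · exfalso; linarith
    · exact hc
  have hs2' : s 2 = 0 := by
    rcases mul_eq_zero.mp hs2 with hc | hc
    · exfalso; linarith
    · exact hc
  have hym : ym = s 1 • xm := by
    rw [hsdec, hs0', hs2']
    funext i
    simp
  have hs1pos : 0 < s 1 := by
    have h2 : ym 2 = s 1 * xm 2 := by rw [hym]; simp
    nlinarith
  -- decompose yp
  obtain ⟨t, htdec, ht0, ht1, ht2⟩ := coord yp m⁻¹ hwyp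
  have ht0' : t 0 = 0 := by
    rcases mul_eq_zero.mp ht0 with hc | hc
    · exfalso; linarith
    · exact hc
  have ht1' : t 1 = 0 := by
    rcases mul_eq_zero.mp ht1 with hc | hc
    · exfalso; linarith
    · exact hc
  have hyp : yp = t 2 • xp := by
    rw [htdec, ht0', ht1']
    funext i
    simp
  have ht2pos : 0 < t 2 := by
    have h2 : yp 2 = t 2 * xp 2 := by rw [hyp]; simp
    nlinarith
  -- orientation and normalization force u 0 = 1
  have hdety' : det3 y0 ym yp = u 0 * s 1 * t 2 * det3 x0 xm xp := by
    rw [hy0, hym, hyp, det3_smul]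
  rw [hdety'] at hdety
  have hu0pos : 0 < u 0 := by nlinarith [mul_pos (mul_pos hs1pos ht2pos) hdet]
  have hu0sq : u 0 ^ 2 = 1 := by
    have hn := hy0 ▸ hy0n
    rw [ldot_smul_self, hx0n, mul_one] at hn
    exact hn
  have hfac : (u 0 - 1) * (u 0 + 1) = 0 := by linear_combination hu0sq
  rcases mul_eq_zero.mp hfac with hc | hc
  · have hone : u 0 = 1 := by linarith
    rw [hy0, hone, one_smul]
  · exfalso; linarith

set_option maxHeartbeats 1000000 in
/-- Equivariance: a null frame of A transported by k ∈ SO(2,1)⁰ with kA = Bk gives a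
null frame of B with neutral vector k·x0. -/
lemma frame_conj {k A B : Matrix (Fin 3) (Fin 3) ℝ} (hk : IsSOplus k)
    (hAB : k * A = B * k) {x0 xm xp : Fin 3 → ℝ} (hf : IsNullFrameOf A x0 xm xp) :
    ∃ ym yp, IsNullFrameOf B (k.mulVec x0) ym yp := by
  obtain ⟨hwx0, hx0n, ⟨hxmnull, hxm2⟩, hxmu, ⟨hxpnull, hxp2⟩, hxpu, l, hl0, hl1, hwxm, hwxp, hdet⟩ := hf
  obtain ⟨hk1, hk2, hk3⟩ := hk
  have hxm0 : xm ≠ 0 := by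
    intro hc
    rw [hc] at hxmu
    simp [EuclUnit] at hxmu
  have hxp0 : xp ≠ 0 := by
    intro hc
    rw [hc] at hxpu
    simp [EuclUnit] at hxpu
  set km := k.mulVec xm with hkm
  set kp := k.mulVec xp with hkp
  have hkm2 : 0 < km 2 := hk3 xm hxmnull hxm0 hxm2
  have hkp2 : 0 < kp 2 := hk3 xp hxpnull hxp0 hxp2
  have hkmnull : ldot km km = 0 := by rw [hkm, hk1]; exact hxmnull
  have hkpnull : ldot kp kp = 0 := by rw [hkp, hk1]; exact hxpnull
  set r := Real.sqrt (km 0 ^ 2 + km 1 ^ 2 + km 2 ^ 2) with hr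
  set q := Real.sqrt (kp 0 ^ 2 + kp 1 ^ 2 + kp 2 ^ 2) with hq
  have hrsum : 0 < km 0 ^ 2 + km 1 ^ 2 + km 2 ^ 2 := by
    nlinarith [sq_nonneg (km 0), sq_nonneg (km 1), hkm2]
  have hqsum : 0 < kp 0 ^ 2 + kp 1 ^ 2 + kp 2 ^ 2 := by
    nlinarith [sq_nonneg (kp 0), sq_nonneg (kp 1), hkp2]
  have hrpos : 0 < r := Real.sqrt_pos.mpr hrsum
  have hqpos : 0 < q := Real.sqrt_pos.mpr hqsum
  have hrsq : r ^ 2 = km 0 ^ 2 + km 1 ^ 2 + km 2 ^ 2 := Real.sq_sqrt (le_of_lt hrsum)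
  have hqsq : q ^ 2 = kp 0 ^ 2 + kp 1 ^ 2 + kp 2 ^ 2 := Real.sq_sqrt (le_of_lt hqsum)
  have hBkm : B.mulVec km = l • km := by
    rw [hkm, Matrix.mulVec_mulVec, ← hAB, ← Matrix.mulVec_mulVec, hwxm, Matrix.mulVec_smul]
  have hBkp : B.mulVec kp = l⁻¹ • kp := by
    rw [hkp, Matrix.mulVec_mulVec, ← hAB, ← Matrix.mulVec_mulVec, hwxp, Matrix.mulVec_smul]
  refine ⟨r⁻¹ • km, q⁻¹ • kp, ?_, ?_, ⟨?_, ?_⟩, ?_, ⟨?_, ?_⟩, ?_, l, hl0, hl1, ?_, ?_, ?_⟩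
  · rw [Matrix.mulVec_mulVec, ← hAB, ← Matrix.mulVec_mulVec, hwx0]
  · rw [hk1]; exact hx0n
  · rw [ldot_smul_self, hkmnull, mul_zero]
  · have : (r⁻¹ • km) 2 = r⁻¹ * km 2 := by simp
    rw [this]; positivity
  · show (r⁻¹ • km) 0 ^ 2 + (r⁻¹ • km) 1 ^ 2 + (r⁻¹ • km) 2 ^ 2 = 1
    have : (r⁻¹ • km) 0 ^ 2 + (r⁻¹ • km) 1 ^ 2 + (r⁻¹ • km) 2 ^ 2 =
        r⁻¹ ^ 2 * (km 0 ^ 2 + km 1 ^ 2 + km 2 ^ 2) := by simp; ring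
    rw [this, ← hrsq]
    field_simp
  · rw [ldot_smul_self, hkpnull, mul_zero]
  · have : (q⁻¹ • kp) 2 = q⁻¹ * kp 2 := by simp
    rw [this]; positivity
  · show (q⁻¹ • kp) 0 ^ 2 + (q⁻¹ • kp) 1 ^ 2 + (q⁻¹ • kp) 2 ^ 2 = 1
    have : (q⁻¹ • kp) 0 ^ 2 + (q⁻¹ • kp) 1 ^ 2 + (q⁻¹ • kp) 2 ^ 2 =
        q⁻¹ ^ 2 * (kp 0 ^ 2 + kp 1 ^ 2 + kp 2 ^ 2) := by simp; ring
    rw [this, ← hqsq]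
    field_simp
  · rw [Matrix.mulVec_smul, hBkm, smul_comm]
  · rw [Matrix.mulVec_smul, hBkp, smul_comm]
  · have h1 : det3 (k.mulVec x0) (r⁻¹ • km) (q⁻¹ • kp) =
        1 * r⁻¹ * q⁻¹ * det3 (k.mulVec x0) km kp := by
      have := det3_smul 1 r⁻¹ q⁻¹ (k.mulVec x0) km kp
      rw [one_smul] at this
      exact this
    have h2 : det3 (k.mulVec x0) km kp = k.det * det3 x0 xm xp := det3_mulVec k x0 xm xp
    rw [h1, h2, hk2]
    have hr' : 0 < r⁻¹ := inv_pos.mpr hrpos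
    have hq' : 0 < q⁻¹ := inv_pos.mpr hqpos
    nlinarith [mul_pos (mul_pos hr' hq') hdet]

/-- α(γηⁿ) = ⟨v_g, x⁰(ghⁿ)⟩ + Σ_{k=0}^{n-1} ⟨v_h, x⁰(h^{n-k} g h^k)⟩, where
γ : x ↦ g x + v_g and η : x ↦ h x + v_h; the translational part of γηⁿ is
v_g + g (Σ_{j=0}^{n-1} h^j v_h). -/
theorem stmt_12 (g h : Matrix (Fin 3) (Fin 3) ℝ) (hg : IsSOplus g) (hh : IsSOplus h)
    (vg vh : Fin 3 → ℝ) (n : ℕ) (hn : 1 ≤ n)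
    (hghyp : ∃ x0 xm xp, IsNullFrameOf g x0 xm xp)
    (hhhyp : ∃ x0 xm xp, IsNullFrameOf h x0 xm xp)
    (x0n : Fin 3 → ℝ) (x0s : ℕ → Fin 3 → ℝ)
    (hgh : ∃ xm xp, IsNullFrameOf (g * h ^ n) x0n xm xp)
    (hks : ∀ k < n, ∃ xm xp, IsNullFrameOf (h ^ (n - k) * g * h ^ k) (x0s k) xm xp) :
    ldot (vg + g.mulVec (∑ j ∈ Finset.range n, (h ^ j).mulVec vh)) x0n =
      ldot vg x0n + ∑ k ∈ Finset.range n, ldot vh (x0s k) := by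
  obtain ⟨xm, xp, hfgh⟩ := hgh
  have hx0fix : (g * h ^ n).mulVec x0n = x0n := hfgh.1
  have key : ∀ j, j < n → x0s j = (h ^ (n - j)).mulVec x0n := by
    intro j hj
    obtain ⟨ym, yp, hfB⟩ := hks j hj
    have hcomm : (h ^ (n - j)) * (g * h ^ n) = (h ^ (n - j) * g * h ^ j) * (h ^ (n - j)) := by
      have hjn : j + (n - j) = n := by omega
      simp only [mul_assoc, ← pow_add, hjn]
    obtain ⟨zm, zp, hfB'⟩ := frame_conj (hh.pow (n - j)) hcomm hfgh
    exact frame_x0_unique hfB' hfB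
  rw [ldot_add_left]
  congr 1
  rw [mulVec_sum, ldot_sum_left]
  apply Finset.sum_congr rfl
  intro j hj
  have hj' : j < n := Finset.mem_range.mp hj
  rw [key j hj']
  have hsplit : g * h ^ n = (g * h ^ j) * h ^ (n - j) := by
    have hjn : j + (n - j) = n := by omega
    rw [mul_assoc, ← pow_add, hjn]
  have hSO : IsSOplus (g * h ^ j) := hg.mul (hh.pow j)
  calc ldot (g.mulVec ((h ^ j).mulVec vh)) x0n
      = ldot ((g * h ^ j).mulVec vh) ((g * h ^ j).mulVec ((h ^ (n - j)).mulVec x0n)) := by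
        rw [Matrix.mulVec_mulVec, Matrix.mulVec_mulVec, ← hsplit, hx0fix]
    _ = ldot vh ((h ^ (n - j)).mulVec x0n) := hSO.1 _ _
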